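/- Let U be a finite set of size k ≥ 1, let T ⊆ U, let 1 ≤ s ≤ k, and let 0 < α < 1. If S is a uniformly random s-element subset of U, then Pr[ |S ∩ T| ∉ [(1−α)·s·|T|/k, (1+α)·s·|T|/k] ] ≤ 2·exp(−α²·s·|T|/(3k)). -/

import Mathlib

open Finset

lemma aux_desc : ∀ (m s k : ℕ), m ≤ s → s ≤ k →
    (k - m).choose (s - m) * k.descFactorial m = k.choose s * s.descFactorial m := by
  intro m
  induction m with
  | zero => intro s k _ _; simp
  | succ n ih =>
      intro s k hms hsk
      have hns : n ≤ s := Nat.le_of_succ_le hms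
      have hnk : n < k := Nat.lt_of_lt_of_le (Nat.lt_of_succ_le hms) hsk
      have hkey : (k - n) * (k - n - 1).choose (s - n - 1) = (k - n).choose (s - n) * (s - n) := by
        have h1 : k - n = Nat.succ (k - n - 1) := by omega
        have h2 : s - n = Nat.succ (s - n - 1) := by omega
        rw [h1, h2]
        simp only [Nat.succ_sub_one]
        exact Nat.add_one_mul_choose_eq _ _
      have hd : k.descFactorial (n + 1) = (k - n) * k.descFactorial n := Nat.descFactorial_succ k n
      have hd2 : s.descFactorial (n + 1) = (s - n) * s.descFactorial n := Nat.descFactorial_succ s n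
      have e1 : k - (n+1) = k - n - 1 := by omega
      have e2 : s - (n+1) = s - n - 1 := by omega
      calc (k - (n+1)).choose (s - (n+1)) * k.descFactorial (n+1)
          = ((k - n) * (k - n - 1).choose (s - n - 1)) * k.descFactorial n := by
            rw [e1, e2, hd]; ring
        _ = ((k - n).choose (s - n) * (s - n)) * k.descFactorial n := by rw [hkey]
        _ = (s - n) * ((k - n).choose (s - n) * k.descFactorial n) := by ring
        _ = (s - n) * (k.choose s * s.descFactorial n) := by rw [ih s k hns hsk]
        _ = k.choose s * s.descFactorial (n+1) := by rw [hd2]; ring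

lemma choose_mul_sub (n r : ℕ) (h : r ≤ n) : n * (n-1).choose r = n.choose r * (n - r) := by
  rcases Nat.eq_zero_or_pos n with h0 | h0
  · subst h0; interval_cases r; simp
  · have h1 : n = Nat.succ (n - 1) := by omega
    have : Nat.succ (n-1) * (n-1).choose r = (Nat.succ (n-1)).choose (r+1) * (r+1) := Nat.add_one_mul_choose_eq (n-1) r
    -- succ (n-1) * choose (n-1) r = choose n (r+1) * (r+1)
    rw [← h1] at this
    rw [this, Nat.choose_succ_right_eq]

lemma aux_desc2 : ∀ (m s k : ℕ), m ≤ k - s → s ≤ k →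
    (k - m).choose s * k.descFactorial m = k.choose s * (k - s).descFactorial m := by
  intro m
  induction m with
  | zero => intro s k _ _; simp
  | succ n ih =>
      intro s k hms hsk
      have hn : n ≤ k - s := Nat.le_of_succ_le hms
      have hkey : (k - n) * (k - n - 1).choose s = (k - n).choose s * (k - n - s) := by
        have := choose_mul_sub (k - n) s (by omega)
        rw [this]
      have e1 : k - (n+1) = k - n - 1 := by omega
      calc (k - (n+1)).choose s * k.descFactorial (n+1)
          = ((k - n) * (k - n - 1).choose s) * k.descFactorial n := by
            rw [e1, Nat.descFactorial_succ]; ring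
        _ = ((k - n).choose s * (k - n - s)) * k.descFactorial n := by rw [hkey]
        _ = (k - n - s) * ((k - n).choose s * k.descFactorial n) := by ring
        _ = (k - n - s) * (k.choose s * (k - s).descFactorial n) := by rw [ih s k hn hsk]
        _ = k.choose s * (k - s).descFactorial (n+1) := by
            rw [Nat.descFactorial_succ]
            have : k - s - n = k - n - s := by omega
            rw [this]; ring

lemma aux_mono : ∀ (m a k : ℕ), a ≤ k → a.descFactorial m * k ^ m ≤ a ^ m * k.descFactorial m := by
  intro m
  induction m with
  | zero => intro a k _; simp
  | succ n ih =>
      intro a k hak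
      have h1 : (a - n) * k ≤ a * (k - n) := by
        rcases le_or_gt n a with h | h
        · have h2 : n ≤ k := le_trans h hak
          zify [h, h2]
          nlinarith
        · have : a - n = 0 := by omega
          simp [this]
      rw [Nat.descFactorial_succ, Nat.descFactorial_succ, pow_succ, pow_succ]
      calc (a - n) * a.descFactorial n * (k ^ n * k)
          = ((a - n) * k) * (a.descFactorial n * k ^ n) := by ring
        _ ≤ (a * (k - n)) * (a ^ n * k.descFactorial n) := Nat.mul_le_mul h1 (ih a k hak)
        _ = a ^ n * a * ((k - n) * k.descFactorial n) := by ring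

lemma ratio1 (m s k : ℕ) (hm : m ≤ s) (hsk : s ≤ k) (hk : 1 ≤ k) :
    ((k - m).choose (s - m) : ℝ) ≤ (k.choose s : ℝ) * ((s : ℝ) / k) ^ m := by
  have hmk : m ≤ k := le_trans hm hsk
  have hdpos : 0 < k.descFactorial m :=
    Nat.pos_of_ne_zero (fun h => by have := Nat.descFactorial_eq_zero_iff_lt.mp h; omega)
  have hid := aux_desc m s k hm hsk
  have hmono := aux_mono m s k hsk
  have hkpos : (0:ℝ) < (k:ℝ) := by exact_mod_cast hk
  have hdposR : (0:ℝ) < (k.descFactorial m : ℝ) := by exact_mod_cast hdpos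
  have hkm : (0:ℝ) < (k:ℝ) ^ m := pow_pos hkpos m
  rw [div_pow, ← mul_div_assoc]
  rw [le_div_iff₀ hkm]
  have hidR : ((k - m).choose (s - m) : ℝ) * (k.descFactorial m : ℝ)
      = (k.choose s : ℝ) * (s.descFactorial m : ℝ) := by exact_mod_cast hid
  have hmonoR : (s.descFactorial m : ℝ) * (k:ℝ) ^ m ≤ (s:ℝ) ^ m * (k.descFactorial m : ℝ) := by
    exact_mod_cast hmono
  rw [← mul_le_mul_iff_left₀ hdposR]
  calc ((k - m).choose (s - m) : ℝ) * (k:ℝ) ^ m * (k.descFactorial m : ℝ)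
      = ((k.choose s : ℝ) * (s.descFactorial m : ℝ)) * (k:ℝ)^m := by
        rw [mul_right_comm, hidR]
    _ = (k.choose s : ℝ) * ((s.descFactorial m : ℝ) * (k:ℝ)^m) := by ring
    _ ≤ (k.choose s : ℝ) * ((s:ℝ)^m * (k.descFactorial m : ℝ)) := by
        apply mul_le_mul_of_nonneg_left hmonoR (by positivity)
    _ = (k.choose s : ℝ) * (s:ℝ)^m * (k.descFactorial m : ℝ) := by ring

lemma ratio2 (m s k : ℕ) (hsk : s ≤ k) (hs : 1 ≤ s) (hk : 1 ≤ k) :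
    ((k - m).choose s : ℝ) ≤ (k.choose s : ℝ) * (((k : ℝ) - s) / k) ^ m := by
  rcases le_or_gt m (k - s) with hm | hm
  · have hmk : m ≤ k := by omega
    have hdpos : 0 < k.descFactorial m :=
      Nat.pos_of_ne_zero (fun h => by have := Nat.descFactorial_eq_zero_iff_lt.mp h; omega)
    have hid := aux_desc2 m s k hm hsk
    have hmono := aux_mono m (k - s) k (by omega)
    have hkpos : (0:ℝ) < (k:ℝ) := by exact_mod_cast hk
    have hdposR : (0:ℝ) < (k.descFactorial m : ℝ) := by exact_mod_cast hdpos
    have hkm : (0:ℝ) < (k:ℝ) ^ m := pow_pos hkpos m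
    have hcast : ((k - s : ℕ) : ℝ) = (k:ℝ) - s := by
      have : s ≤ k := hsk
      push_cast [this]; ring
    rw [← hcast, div_pow, ← mul_div_assoc, le_div_iff₀ hkm]
    have hidR : ((k - m).choose s : ℝ) * (k.descFactorial m : ℝ)
        = (k.choose s : ℝ) * ((k - s).descFactorial m : ℝ) := by exact_mod_cast hid
    have hmonoR : ((k - s).descFactorial m : ℝ) * (k:ℝ) ^ m
        ≤ ((k - s : ℕ) : ℝ) ^ m * (k.descFactorial m : ℝ) := by exact_mod_cast hmono
    rw [← mul_le_mul_iff_left₀ hdposR]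
    calc ((k - m).choose s : ℝ) * (k:ℝ) ^ m * (k.descFactorial m : ℝ)
        = ((k.choose s : ℝ) * ((k - s).descFactorial m : ℝ)) * (k:ℝ)^m := by
          rw [mul_right_comm, hidR]
      _ = (k.choose s : ℝ) * (((k - s).descFactorial m : ℝ) * (k:ℝ)^m) := by ring
      _ ≤ (k.choose s : ℝ) * (((k - s:ℕ):ℝ)^m * (k.descFactorial m : ℝ)) := by
          apply mul_le_mul_of_nonneg_left hmonoR (by positivity)
      _ = (k.choose s : ℝ) * ((k - s:ℕ):ℝ)^m * (k.descFactorial m : ℝ) := by ring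
  · have h0 : (k - m).choose s = 0 := by
      apply Nat.choose_eq_zero_of_lt; omega
    rw [h0]
    push_cast
    have : (0:ℝ) ≤ ((k:ℝ) - s)/k := by
      apply div_nonneg _ (by positivity)
      have : (s:ℝ) ≤ k := by exact_mod_cast hsk
      linarith
    positivity

section Counting
variable {U : Type*} [Fintype U] [DecidableEq U]

lemma filter_supset_card (A : Finset U) (s m : ℕ) (hm : m ≤ s) (hAcard : A.card = m) :
    (((univ : Finset U).powersetCard s).filter (fun S => A ⊆ S)).card
      = (Fintype.card U - m).choose (s - m) := by
  have h : (((univ : Finset U).powersetCard s).filter (fun S => A ⊆ S)).card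
      = (Aᶜ.powersetCard (s - m)).card := by
    apply card_bij' (fun S _ => S \ A) (fun B _ => B ∪ A)
    · intro S hS
      simp only [mem_filter, mem_powersetCard_univ] at hS
      obtain ⟨hScard, hAS⟩ := hS
      rw [mem_powersetCard]
      constructor
      · intro x hx
        simp only [mem_sdiff] at hx
        simp [mem_compl, hx.2]
      · rw [card_sdiff_of_subset hAS, hScard, hAcard]
    · intro B hB
      rw [mem_powersetCard] at hB
      obtain ⟨hBc, hBcard⟩ := hB
      have hdisj : Disjoint B A := by
        rw [Finset.disjoint_left]
        intro x hx hxA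
        have := hBc hx
        simp [mem_compl] at this
        exact this hxA
      simp only [mem_filter, mem_powersetCard_univ]
      constructor
      · rw [card_union_of_disjoint hdisj, hBcard, hAcard]; omega
      · exact subset_union_right
    · intro S hS
      simp only [mem_filter, mem_powersetCard_univ] at hS
      exact sdiff_union_of_subset hS.2
    · intro B hB
      rw [mem_powersetCard] at hB
      have hdisj : Disjoint B A := by
        rw [Finset.disjoint_left]
        intro x hx hxA
        have := hB.1 hx
        simp [mem_compl] at this
        exact this hxA
      exact union_sdiff_cancel_right hdisj
  rw [h, card_powersetCard, card_compl, hAcard]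

lemma count1 (T : Finset U) (s m : ℕ) (hm : m ≤ s) :
    ∑ S ∈ (univ : Finset U).powersetCard s, (S ∩ T).card.choose m
      = T.card.choose m * (Fintype.card U - m).choose (s - m) := by
  have key : ∀ S ∈ (univ : Finset U).powersetCard s,
      (S ∩ T).card.choose m = ((T.powersetCard m).filter (fun A => A ⊆ S)).card := by
    intro S _
    rw [← card_powersetCard m (S ∩ T)]
    congr 1
    ext A
    simp only [mem_powersetCard, mem_filter, subset_inter_iff]
    tauto
  rw [sum_congr rfl key]
  simp_rw [card_filter]
  rw [Finset.sum_comm]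
  have inner : ∀ A ∈ T.powersetCard m,
      (∑ S ∈ (univ : Finset U).powersetCard s, if A ⊆ S then 1 else 0)
        = (Fintype.card U - m).choose (s - m) := by
    intro A hA
    rw [mem_powersetCard] at hA
    rw [← card_filter]
    exact filter_supset_card A s m hm hA.2
  rw [sum_congr rfl inner, sum_const, card_powersetCard, smul_eq_mul]

lemma count2 (T : Finset U) (s m : ℕ) :
    ∑ S ∈ (univ : Finset U).powersetCard s, (T \ S).card.choose m
      = T.card.choose m * (Fintype.card U - m).choose s := by
  have key : ∀ S ∈ (univ : Finset U).powersetCard s,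
      (T \ S).card.choose m = ((T.powersetCard m).filter (fun A => Disjoint A S)).card := by
    intro S _
    rw [← card_powersetCard m (T \ S)]
    congr 1
    ext A
    simp only [mem_powersetCard, mem_filter, subset_sdiff]
    tauto
  rw [sum_congr rfl key]
  simp_rw [card_filter]
  rw [Finset.sum_comm]
  have inner : ∀ A ∈ T.powersetCard m,
      (∑ S ∈ (univ : Finset U).powersetCard s, if Disjoint A S then 1 else 0)
        = (Fintype.card U - m).choose s := by
    intro A hA
    rw [mem_powersetCard] at hA
    rw [← card_filter]
    have h : ((univ : Finset U).powersetCard s).filter (fun S => Disjoint A S)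
        = Aᶜ.powersetCard s := by
      ext S
      simp only [mem_filter, mem_powersetCard_univ, mem_powersetCard]
      constructor
      · rintro ⟨⟨-, hc⟩, hd⟩
        exact ⟨fun x hx => mem_compl.mpr (fun hxA => (Finset.disjoint_left.mp hd) hxA hx), hc⟩
      · rintro ⟨hc, hcard⟩
        refine ⟨⟨subset_univ S, hcard⟩, ?_⟩
        rw [Finset.disjoint_left]
        intro x hxA hxS
        exact absurd hxA (mem_compl.mp (hc hxS))
    rw [h, card_powersetCard, card_compl, hA.2]
  rw [sum_congr rfl inner, sum_const, card_powersetCard, smul_eq_mul]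

end Counting

lemma binom_expand (n s : ℕ) (hn : n ≤ s) (u : ℝ) :
    (1 + u) ^ n = ∑ m ∈ Finset.range (s + 1), (n.choose m : ℝ) * u ^ m := by
  calc (1 + u) ^ n = (u + 1) ^ n := by ring
    _ = ∑ m ∈ Finset.range (n + 1), u ^ m * 1 ^ (n - m) * (n.choose m : ℝ) := add_pow u 1 n
    _ = ∑ m ∈ Finset.range (s + 1), u ^ m * 1 ^ (n - m) * (n.choose m : ℝ) := by
        apply Finset.sum_subset (Finset.range_subset_range.mpr (by omega))
        intro m hm hnm
        simp only [Finset.mem_range] at hm hnm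
        rw [Nat.choose_eq_zero_of_lt (by omega)]
        simp
    _ = ∑ m ∈ Finset.range (s + 1), (n.choose m : ℝ) * u ^ m := by
        apply Finset.sum_congr rfl; intro m _; ring

lemma binom_sum_le (t n : ℕ) (y : ℝ) (hy : 0 ≤ y) :
    ∑ m ∈ Finset.range (n + 1), (t.choose m : ℝ) * y ^ m ≤ (1 + y) ^ t := by
  have h1 : ∑ m ∈ Finset.range (n + 1), (t.choose m : ℝ) * y ^ m
      ≤ ∑ m ∈ Finset.range (n + t + 1), (t.choose m : ℝ) * y ^ m := by
    apply Finset.sum_le_sum_of_subset_of_nonneg (Finset.range_subset_range.mpr (by omega))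
    intro m _ _
    positivity
  have h2 : (1 + y) ^ t = ∑ m ∈ Finset.range (n + t + 1), (t.choose m : ℝ) * y ^ m :=
    binom_expand t (n + t) (by omega) y
  linarith

section MGF
variable {U : Type*} [Fintype U] [DecidableEq U]

lemma mgf1 (T : Finset U) (s : ℕ) (hsk : s ≤ Fintype.card U) (hk : 1 ≤ Fintype.card U)
    (u : ℝ) (hu : 0 ≤ u) :
    ∑ S ∈ (univ : Finset U).powersetCard s, (1 + u) ^ (S ∩ T).card
      ≤ ((Fintype.card U).choose s : ℝ)
        * (1 + u * s / Fintype.card U) ^ T.card := by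
  set k := Fintype.card U with hkdef
  set t := T.card with htdef
  calc ∑ S ∈ (univ : Finset U).powersetCard s, (1 + u) ^ (S ∩ T).card
      = ∑ S ∈ (univ : Finset U).powersetCard s,
          ∑ m ∈ Finset.range (s + 1), ((S ∩ T).card.choose m : ℝ) * u ^ m := by
        apply Finset.sum_congr rfl
        intro S hS
        apply binom_expand
        rw [mem_powersetCard_univ] at hS
        calc (S ∩ T).card ≤ S.card := card_le_card inter_subset_left
          _ = s := hS
    _ = ∑ m ∈ Finset.range (s + 1),
          (∑ S ∈ (univ : Finset U).powersetCard s, ((S ∩ T).card.choose m : ℝ)) * u ^ m := by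
        rw [Finset.sum_comm]
        apply Finset.sum_congr rfl
        intro m _
        rw [Finset.sum_mul]
    _ = ∑ m ∈ Finset.range (s + 1),
          ((t.choose m : ℝ) * ((k - m).choose (s - m) : ℝ)) * u ^ m := by
        apply Finset.sum_congr rfl
        intro m hm
        congr 1
        rw [← Nat.cast_sum]
        rw [count1 T s m (by simp only [Finset.mem_range] at hm; omega)]
        push_cast
        ring
    _ ≤ ∑ m ∈ Finset.range (s + 1),
          ((t.choose m : ℝ) * ((k.choose s : ℝ) * ((s : ℝ) / k) ^ m)) * u ^ m := by
        apply Finset.sum_le_sum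
        intro m hm
        simp only [Finset.mem_range] at hm
        apply mul_le_mul_of_nonneg_right _ (by positivity)
        exact mul_le_mul_of_nonneg_left (ratio1 m s k (by omega) hsk hk) (by positivity)
    _ = (k.choose s : ℝ) * ∑ m ∈ Finset.range (s + 1), (t.choose m : ℝ) * (u * s / k) ^ m := by
        rw [Finset.mul_sum]
        apply Finset.sum_congr rfl
        intro m _
        rw [div_pow, div_pow, mul_pow]
        ring
    _ ≤ (k.choose s : ℝ) * (1 + u * s / k) ^ t := by
        apply mul_le_mul_of_nonneg_left _ (by positivity)
        apply binom_sum_le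
        positivity

lemma mgf2 (T : Finset U) (s : ℕ) (hsk : s ≤ Fintype.card U) (hs : 1 ≤ s)
    (hk : 1 ≤ Fintype.card U) (u : ℝ) (hu : 0 ≤ u) :
    ∑ S ∈ (univ : Finset U).powersetCard s, (1 + u) ^ (T \ S).card
      ≤ ((Fintype.card U).choose s : ℝ)
        * (1 + u * ((Fintype.card U : ℝ) - s) / Fintype.card U) ^ T.card := by
  set k := Fintype.card U with hkdef
  set t := T.card with htdef
  have hks : (0:ℝ) ≤ ((k:ℝ) - s) / k := by
    apply div_nonneg _ (by positivity)
    have : (s:ℝ) ≤ k := by exact_mod_cast hsk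
    linarith
  calc ∑ S ∈ (univ : Finset U).powersetCard s, (1 + u) ^ (T \ S).card
      = ∑ S ∈ (univ : Finset U).powersetCard s,
          ∑ m ∈ Finset.range (t + 1), ((T \ S).card.choose m : ℝ) * u ^ m := by
        apply Finset.sum_congr rfl
        intro S _
        exact binom_expand _ t (card_le_card sdiff_subset) u
    _ = ∑ m ∈ Finset.range (t + 1),
          (∑ S ∈ (univ : Finset U).powersetCard s, ((T \ S).card.choose m : ℝ)) * u ^ m := by
        rw [Finset.sum_comm]
        apply Finset.sum_congr rfl
        intro m _
        rw [Finset.sum_mul]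
    _ = ∑ m ∈ Finset.range (t + 1),
          ((t.choose m : ℝ) * ((k - m).choose s : ℝ)) * u ^ m := by
        apply Finset.sum_congr rfl
        intro m _
        congr 1
        rw [← Nat.cast_sum, count2 T s m]
        push_cast
        ring
    _ ≤ ∑ m ∈ Finset.range (t + 1),
          ((t.choose m : ℝ) * ((k.choose s : ℝ) * (((k:ℝ) - s) / k) ^ m)) * u ^ m := by
        apply Finset.sum_le_sum
        intro m _
        apply mul_le_mul_of_nonneg_right _ (by positivity)
        exact mul_le_mul_of_nonneg_left (ratio2 m s k hsk hs hk) (by positivity)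
    _ = (k.choose s : ℝ) * ∑ m ∈ Finset.range (t + 1),
          (t.choose m : ℝ) * (u * (((k:ℝ) - s) / k)) ^ m := by
        rw [Finset.mul_sum]
        apply Finset.sum_congr rfl
        intro m _
        rw [mul_pow]
        ring
    _ ≤ (k.choose s : ℝ) * (1 + u * (((k:ℝ) - s) / k)) ^ t := by
        apply mul_le_mul_of_nonneg_left _ (by positivity)
        apply binom_sum_le
        positivity
    _ = (k.choose s : ℝ) * (1 + u * ((k:ℝ) - s) / k) ^ t := by
        rw [mul_div_assoc]

end MGF

lemma log_le_half_sub_inv {z : ℝ} (hz : 1 ≤ z) : Real.log z ≤ (z - z⁻¹) / 2 := by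
  rcases eq_or_lt_of_le hz with h | h
  · rw [← h]; simp
  · have hlz : 0 < Real.log z := Real.log_pos h
    have h2 : Real.log z < Real.sinh (Real.log z) := Real.self_lt_sinh_iff.mpr hlz
    rw [Real.sinh_log (by linarith)] at h2
    linarith

lemma log_lb {x : ℝ} (h0 : 0 ≤ x) (h1 : x ≤ 1) : 2 * x / 3 ≤ Real.log (1 + x) := by
  have hc := strictConcaveOn_log_Ioi.concaveOn
  have key := hc.2 (Set.mem_Ioi.mpr (by norm_num : (0:ℝ) < 1))
    (Set.mem_Ioi.mpr (by norm_num : (0:ℝ) < 2))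
    (by linarith : (0:ℝ) ≤ 1 - x) h0 (by ring)
  simp only [smul_eq_mul, Real.log_one, mul_zero, zero_add] at key
  have he : (1 - x) * 1 + x * 2 = 1 + x := by ring
  rw [he] at key
  have hl2 : (2:ℝ)/3 ≤ Real.log 2 := by
    have := Real.log_two_gt_d9
    linarith
  nlinarith

lemma l1 {α : ℝ} (h0 : 0 < α) (h1 : α ≤ 1) : α + α ^ 2 / 3 ≤ (1 + α) * Real.log (1 + α) := by
  set f : ℝ → ℝ := fun x => (1 + x) * Real.log (1 + x) - x - x ^ 2 / 3 with hf
  have hder : ∀ x ∈ Set.Ioo (0:ℝ) 1, HasDerivAt f (Real.log (1 + x) - 2 * x / 3) x := by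
    intro x hx
    have hx0 : (0:ℝ) < 1 + x := by simp only [Set.mem_Ioo] at hx; linarith
    have h1x : HasDerivAt (fun y : ℝ => 1 + y) 1 x := (hasDerivAt_id x).const_add 1
    have hlog : HasDerivAt (fun y : ℝ => Real.log (1 + y)) ((1 + x)⁻¹ * 1) x :=
      (Real.hasDerivAt_log (ne_of_gt hx0)).comp x h1x
    have hmul : HasDerivAt (fun y : ℝ => (1 + y) * Real.log (1 + y))
        (1 * Real.log (1 + x) + (1 + x) * ((1 + x)⁻¹ * 1)) x := h1x.mul hlog
    have hpow : HasDerivAt (fun y : ℝ => y ^ 2 / 3) ((2 * x ^ 1) / 3) x :=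
      (hasDerivAt_pow 2 x).div_const 3
    have := (hmul.sub (hasDerivAt_id x)).sub hpow
    convert this using 1
    · rfl
    · rfl
    · rfl
    · simp only [mul_one, one_mul, pow_one, mul_inv_cancel₀ (ne_of_gt hx0)]; ring
  have hcont : ContinuousOn f (Set.Icc (0:ℝ) 1) := by
    apply ContinuousOn.sub
    apply ContinuousOn.sub
    · exact (continuousOn_const.add continuousOn_id).mul
        ((continuousOn_const.add continuousOn_id).log
          (fun x hx => by simp only [Set.mem_Icc] at hx; simp only [Pi.add_apply, id]; intro h; linarith [hx.1]))
    · exact continuousOn_id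
    · exact (continuousOn_id.pow 2).div_const 3
  have hmono : MonotoneOn f (Set.Icc (0:ℝ) 1) := by
    apply monotoneOn_of_deriv_nonneg (convex_Icc 0 1) hcont
    · intro x hx
      rw [interior_Icc] at hx
      exact (hder x hx).differentiableAt.differentiableWithinAt
    · intro x hx
      rw [interior_Icc] at hx
      rw [(hder x hx).deriv]
      have := log_lb (le_of_lt hx.1) (le_of_lt hx.2)
      linarith
  have h00 : f 0 = 0 := by simp [hf]
  have := hmono (Set.mem_Icc.mpr ⟨le_refl 0, by norm_num⟩)
    (Set.mem_Icc.mpr ⟨le_of_lt h0, h1⟩) (le_of_lt h0)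
  rw [h00] at this
  simp only [hf] at this
  linarith

lemma l2 {α : ℝ} (h0 : 0 < α) (h1 : α < 1) :
    -α - (1 - α) * Real.log (1 - α) ≤ -α ^ 2 / 3 := by
  have ha : (0:ℝ) < 1 - α := by linarith
  have hz : (1:ℝ) ≤ (1 - α)⁻¹ := by
    rw [le_inv_comm₀ one_pos ha]
    linarith
  have h := log_le_half_sub_inv hz
  rw [Real.log_inv, inv_inv] at h
  -- -log(1-α) ≤ ((1-α)⁻¹ - (1-α))/2
  have h2 : -(1 - α) * Real.log (1 - α) ≤ (1 - (1 - α) ^ 2) / 2 := by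
    have := mul_le_mul_of_nonneg_left h (le_of_lt ha)
    have hinv : (1 - α) * (1 - α)⁻¹ = 1 := mul_inv_cancel₀ (ne_of_gt ha)
    nlinarith
  nlinarith

set_option maxHeartbeats 2000000 in
/-- Concentration of the intersection of a uniformly random `s`-element subset `S` of a
`k`-element universe `U` with a fixed set `T ⊆ U`:
`Pr[ |S ∩ T| ∉ [(1−α)·s·|T|/k, (1+α)·s·|T|/k] ] ≤ 2·exp(−α²·s·|T|/(3k))`.
The probability is expressed by counting: the random set `S` is uniform over
`(univ : Finset U).powersetCard s`, the family of all `s`-element subsets of `U`. -/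
theorem uniform_subset_intersection_concentration
    {U : Type*} [Fintype U] [DecidableEq U]
    (hk : 1 ≤ Fintype.card U) (T : Finset U)
    (s : ℕ) (hs1 : 1 ≤ s) (hsk : s ≤ Fintype.card U)
    (α : ℝ) (hα0 : 0 < α) (hα1 : α < 1) :
    ((((univ : Finset U).powersetCard s).filter (fun S =>
        ((S ∩ T).card : ℝ) ∉
          Set.Icc ((1 - α) * s * T.card / Fintype.card U)
            ((1 + α) * s * T.card / Fintype.card U))).card : ℝ) /
      (((univ : Finset U).powersetCard s).card : ℝ)
      ≤ 2 * Real.exp (-(α ^ 2 * s * T.card) / (3 * Fintype.card U)) := by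
  classical
  set k := Fintype.card U with hkdef
  set t := T.card with htdef
  set Ω := (univ : Finset U).powersetCard s with hΩdef
  have hkR : (0:ℝ) < (k:ℝ) := by exact_mod_cast hk
  have hNpos : 0 < k.choose s := Nat.choose_pos hsk
  have hNR : (0:ℝ) < (k.choose s : ℝ) := by exact_mod_cast hNpos
  have hΩcard : Ω.card = k.choose s := by rw [hΩdef, card_powersetCard, card_univ]
  set μ : ℝ := (s:ℝ) * t / k with hμdef
  have hμ0 : 0 ≤ μ := by positivity
  have hskR : (s:ℝ) ≤ (k:ℝ) := by exact_mod_cast hsk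
  set lo : ℝ := (1 - α) * s * t / k with hlodef
  set hi : ℝ := (1 + α) * s * t / k with hhidef
  have hloμ : lo = (1 - α) * μ := by rw [hlodef, hμdef]; ring
  have hhiμ : hi = (1 + α) * μ := by rw [hhidef, hμdef]; ring
  have hXW : ∀ S : Finset U, (S ∩ T).card + (T \ S).card = t := by
    intro S
    rw [inter_comm]
    exact card_inter_add_card_sdiff T S
  set E : ℝ := Real.exp (-(α ^ 2 * μ) / 3) with hEdef
  have hEgoal : Real.exp (-(α ^ 2 * (s:ℝ) * t) / (3 * k)) = E := by
    rw [hEdef]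
    congr 1
    rw [hμdef]
    field_simp
  set B1 : Finset (Finset U) := Ω.filter (fun S => ((S ∩ T).card : ℝ) < lo) with hB1def
  set B2 : Finset (Finset U) := Ω.filter (fun S => hi < ((S ∩ T).card : ℝ)) with hB2def
  have hsub : Ω.filter (fun S => ((S ∩ T).card : ℝ) ∉ Set.Icc lo hi) ⊆ B1 ∪ B2 := by
    intro S hS
    rw [mem_filter] at hS
    obtain ⟨hSΩ, hSc⟩ := hS
    rw [Set.mem_Icc, not_and_or, not_le, not_le] at hSc
    rw [mem_union, hB1def, hB2def, mem_filter, mem_filter]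
    tauto
  -- upper tail
  have hc1 : (1:ℝ) < 1 + α := by linarith
  have hlog1 : 0 < Real.log (1 + α) := Real.log_pos hc1
  have hpow1 : ∀ n : ℕ, (1 + α) ^ n = Real.exp ((n : ℝ) * Real.log (1 + α)) := by
    intro n
    rw [Real.exp_nat_mul, Real.exp_log (by linarith)]
  have hsum1 : ∑ S ∈ Ω, (1 + α) ^ (S ∩ T).card ≤ (k.choose s : ℝ) * Real.exp (α * μ) := by
    calc ∑ S ∈ Ω, (1 + α) ^ (S ∩ T).card
        ≤ (k.choose s : ℝ) * (1 + α * s / k) ^ t := mgf1 T s hsk hk α (le_of_lt hα0)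
      _ ≤ (k.choose s : ℝ) * Real.exp (α * s / k) ^ t := by
          apply mul_le_mul_of_nonneg_left _ (le_of_lt hNR)
          apply pow_le_pow_left₀ (by positivity)
          linarith [Real.add_one_le_exp (α * s / k)]
      _ = (k.choose s : ℝ) * Real.exp (α * μ) := by
          rw [← Real.exp_nat_mul]
          congr 1
          rw [hμdef]; ring
  have hB2bound : (B2.card : ℝ) ≤ (k.choose s : ℝ) * E := by
    have hstep : (B2.card : ℝ) * Real.exp (hi * Real.log (1 + α))
        ≤ ∑ S ∈ Ω, (1 + α) ^ (S ∩ T).card := by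
      calc (B2.card : ℝ) * Real.exp (hi * Real.log (1 + α))
          ≤ ∑ S ∈ B2, (1 + α) ^ (S ∩ T).card := by
            rw [← nsmul_eq_mul]
            apply Finset.card_nsmul_le_sum
            intro S hS
            rw [hB2def, mem_filter] at hS
            rw [hpow1]
            apply Real.exp_le_exp.mpr
            exact mul_le_mul_of_nonneg_right (le_of_lt hS.2) (le_of_lt hlog1)
        _ ≤ ∑ S ∈ Ω, (1 + α) ^ (S ∩ T).card := by
            apply Finset.sum_le_sum_of_subset_of_nonneg (filter_subset _ _)
            intro S _ _
            positivity
    have h2 : (B2.card : ℝ) ≤ (k.choose s : ℝ)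
        * Real.exp (α * μ - hi * Real.log (1 + α)) := by
      rw [Real.exp_sub, ← mul_div_assoc, le_div_iff₀ (Real.exp_pos _)]
      exact le_trans hstep hsum1
    refine le_trans h2 (mul_le_mul_of_nonneg_left ?_ (le_of_lt hNR))
    rw [hEdef]
    apply Real.exp_le_exp.mpr
    have hl := mul_le_mul_of_nonneg_left (l1 hα0 (le_of_lt hα1)) hμ0
    rw [hhiμ]
    nlinarith
  -- lower tail
  have hc2 : (0:ℝ) < 1 - α := by linarith
  have hc2' : 1 - α < 1 := by linarith
  have hlog2 : Real.log (1 - α) < 0 := Real.log_neg hc2 hc2'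
  have hpow2 : ∀ n : ℕ, (1 - α) ^ n = Real.exp ((n : ℝ) * Real.log (1 - α)) := by
    intro n
    rw [Real.exp_nat_mul, Real.exp_log hc2]
  have hu : (0:ℝ) ≤ (1 - α)⁻¹ - 1 := by
    have : (1:ℝ) ≤ (1 - α)⁻¹ := by
      rw [le_inv_comm₀ one_pos hc2]
      linarith
    linarith
  have hsum2 : ∑ S ∈ Ω, (1 - α) ^ (S ∩ T).card
      ≤ (k.choose s : ℝ) * Real.exp (-(α * μ)) := by
    have hdecomp : ∀ S ∈ Ω, (1 - α) ^ (S ∩ T).card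
        = (1 - α) ^ t * (1 + ((1 - α)⁻¹ - 1)) ^ (T \ S).card := by
      intro S _
      have h1 : (1:ℝ) + ((1 - α)⁻¹ - 1) = (1 - α)⁻¹ := by ring
      rw [h1, ← hXW S, pow_add, inv_pow]
      rw [mul_assoc, mul_inv_cancel₀ (pow_ne_zero _ (ne_of_gt hc2)), mul_one]
    rw [Finset.sum_congr rfl hdecomp, ← Finset.mul_sum]
    have hmgf := mgf2 T s hsk hs1 hk ((1 - α)⁻¹ - 1) hu
    calc (1 - α) ^ t * ∑ S ∈ Ω, (1 + ((1 - α)⁻¹ - 1)) ^ (T \ S).card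
        ≤ (1 - α) ^ t * ((k.choose s : ℝ)
            * (1 + ((1 - α)⁻¹ - 1) * ((k:ℝ) - s) / k) ^ t) := by
          exact mul_le_mul_of_nonneg_left hmgf (by positivity)
      _ = (k.choose s : ℝ) * ((1 - α) * (1 + ((1 - α)⁻¹ - 1) * ((k:ℝ) - s) / k)) ^ t := by
          rw [mul_pow]; ring
      _ = (k.choose s : ℝ) * (1 - α * s / k) ^ t := by
          have hca : (1 - α) * ((1 - α)⁻¹ - 1) = α := by
            field_simp
            ring
          have hbase : (1 - α) * (1 + ((1 - α)⁻¹ - 1) * ((k:ℝ) - s) / k)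
              = 1 - α * s / k := by
            have expand : (1 - α) * (1 + ((1 - α)⁻¹ - 1) * ((k:ℝ) - s) / k)
                = (1 - α) + ((1 - α) * ((1 - α)⁻¹ - 1)) * (((k:ℝ) - s) / k) := by
              ring
            rw [expand, hca]
            field_simp
            ring
          rw [hbase]
      _ ≤ (k.choose s : ℝ) * Real.exp (-(α * s / k)) ^ t := by
          apply mul_le_mul_of_nonneg_left _ (le_of_lt hNR)
          apply pow_le_pow_left₀
          · have : α * s / k ≤ 1 := by
              rw [div_le_one hkR]
              nlinarith
            linarith
          · linarith [Real.add_one_le_exp (-(α * s / k))]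
      _ = (k.choose s : ℝ) * Real.exp (-(α * μ)) := by
          rw [← Real.exp_nat_mul]
          congr 1
          rw [hμdef]; ring
  have hB1bound : (B1.card : ℝ) ≤ (k.choose s : ℝ) * E := by
    have hstep : (B1.card : ℝ) * Real.exp (lo * Real.log (1 - α))
        ≤ ∑ S ∈ Ω, (1 - α) ^ (S ∩ T).card := by
      calc (B1.card : ℝ) * Real.exp (lo * Real.log (1 - α))
          ≤ ∑ S ∈ B1, (1 - α) ^ (S ∩ T).card := by
            rw [← nsmul_eq_mul]
            apply Finset.card_nsmul_le_sum
            intro S hS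
            rw [hB1def, mem_filter] at hS
            rw [hpow2]
            apply Real.exp_le_exp.mpr
            exact mul_le_mul_of_nonpos_right (le_of_lt hS.2) (le_of_lt hlog2)
        _ ≤ ∑ S ∈ Ω, (1 - α) ^ (S ∩ T).card := by
            apply Finset.sum_le_sum_of_subset_of_nonneg (filter_subset _ _)
            intro S _ _
            exact pow_nonneg (le_of_lt hc2) _
    have h2 : (B1.card : ℝ) ≤ (k.choose s : ℝ)
        * Real.exp (-(α * μ) - lo * Real.log (1 - α)) := by
      rw [Real.exp_sub, ← mul_div_assoc, le_div_iff₀ (Real.exp_pos _)]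
      exact le_trans hstep hsum2
    refine le_trans h2 (mul_le_mul_of_nonneg_left ?_ (le_of_lt hNR))
    rw [hEdef]
    apply Real.exp_le_exp.mpr
    have hl := mul_le_mul_of_nonneg_left (l2 hα0 hα1) hμ0
    rw [hloμ]
    nlinarith
  -- combine
  rw [hEgoal, hΩcard, div_le_iff₀ hNR]
  have hcard : ((Ω.filter (fun S => ((S ∩ T).card : ℝ) ∉ Set.Icc lo hi)).card : ℝ)
      ≤ (B1.card : ℝ) + (B2.card : ℝ) := by
    have := le_trans (card_le_card hsub) (card_union_le B1 B2)
    exact_mod_cast this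
  calc ((Ω.filter (fun S => ((S ∩ T).card : ℝ) ∉ Set.Icc lo hi)).card : ℝ)
      ≤ (B1.card : ℝ) + (B2.card : ℝ) := hcard
    _ ≤ (k.choose s : ℝ) * E + (k.choose s : ℝ) * E := add_le_add hB1bound hB2bound
    _ = 2 * E * (k.choose s : ℝ) := by ring
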